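/- (Wolfowitz-type ergodicity of forward products.) Fix ε > 0 and an integer B ≥ 1. Let (A[k])_{k≥0} be a sequence of column stochastic matrices in ℝ^{n×n} such that: (i) every diagonal entry satisfies A_{jj}[k] ≥ ε; (ii) every entry of A[k] is either 0 or at least ε; and (iii) for every k ∈ ℕ, the directed graph on n nodes whose edge set is the union over t = kB, kB+1, …, kB+B−1 of {(j, i) : A_{ji}[t] > 0, i ≠ j} is strongly connected. Then the forward products B_{k:0} = A[k] A[k−1] ⋯ A[0] satisfy: for every row index j and every pair of column indices i, i′, the difference (B_{k:0})_{ji} − (B_{k:0})_{ji′} converges to 0 as k → ∞; i.e., all columns of B_{k:0} asymptotically coincide. -/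

import Mathlib

open Finset Matrix

namespace Stmt10

/-- Forward partial products: `Phi A s m = A (s+m-1) * ⋯ * A s`. -/
noncomputable def Phi {n : ℕ} (A : ℕ → Matrix (Fin n) (Fin n) ℝ) (s : ℕ) :
    ℕ → Matrix (Fin n) (Fin n) ℝ
  | 0 => 1
  | m + 1 => A (s + m) * Phi A s m

variable {n : ℕ} {ε : ℝ} {A : ℕ → Matrix (Fin n) (Fin n) ℝ} {B : ℕ}

lemma Phi_nonneg (hnn : ∀ k i j, 0 ≤ A k i j) (s m : ℕ) (j i : Fin n) :
    0 ≤ Phi A s m j i := by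
  induction m generalizing j i with
  | zero =>
    simp only [Phi, Matrix.one_apply]
    split <;> norm_num
  | succ m ih =>
    simp only [Phi, Matrix.mul_apply]
    exact Finset.sum_nonneg fun l _ => mul_nonneg (hnn _ _ _) (ih l i)

lemma Phi_col (hcol : ∀ k j, ∑ i, A k i j = 1) (s m : ℕ) (i : Fin n) :
    ∑ j, Phi A s m j i = 1 := by
  induction m with
  | zero =>
    simp [Phi, Matrix.one_apply]
  | succ m ih =>
    simp only [Phi, Matrix.mul_apply]
    rw [Finset.sum_comm]
    simp_rw [← Finset.sum_mul, hcol, one_mul, ih]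

lemma Phi_pos_le (hnn : ∀ k i j, 0 ≤ A k i j) (hε : 0 < ε)
    (hent : ∀ k i j, A k i j = 0 ∨ ε ≤ A k i j) (s m : ℕ) (j i : Fin n)
    (h : 0 < Phi A s m j i) : ε ^ m ≤ Phi A s m j i := by
  induction m generalizing j i with
  | zero =>
    simp only [Phi, Matrix.one_apply] at h ⊢
    split at h <;> simp_all
  | succ m ih =>
    simp only [Phi, Matrix.mul_apply] at h ⊢
    obtain ⟨l, -, hl⟩ := Finset.exists_lt_of_sum_lt (f := fun _ => (0:ℝ)) (by simpa using h)
    have hA : 0 < A (s + m) j l := by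
      rcases (hnn (s+m) j l).lt_or_eq with h' | h'
      · exact h'
      · exfalso; rw [← h'] at hl; simp at hl
    have hP : 0 < Phi A s m l i := by
      rcases (Phi_nonneg hnn s m l i).lt_or_eq with h' | h'
      · exact h'
      · exfalso; rw [← h'] at hl; simp at hl
    have hεA : ε ≤ A (s + m) j l := (hent _ _ _).resolve_left (by positivity)
    calc ε ^ (m+1) = ε * ε ^ m := by ring
    _ ≤ A (s + m) j l * Phi A s m l i :=
        mul_le_mul hεA (ih l i hP) (by positivity) (hnn _ _ _)
    _ ≤ ∑ l, A (s + m) j l * Phi A s m l i :=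
        Finset.single_le_sum (f := fun l => A (s + m) j l * Phi A s m l i)
          (fun l _ => mul_nonneg (hnn _ _ _) (Phi_nonneg hnn s m l i)) (Finset.mem_univ l)

lemma Phi_step (hnn : ∀ k i j, 0 ≤ A k i j) {s m : ℕ} {j l i : Fin n}
    (hA : 0 < A (s + m) j l) (hP : 0 < Phi A s m l i) : 0 < Phi A s (m + 1) j i := by
  simp only [Phi, Matrix.mul_apply]
  calc (0:ℝ) < A (s + m) j l * Phi A s m l i := mul_pos hA hP
  _ ≤ ∑ l, A (s + m) j l * Phi A s m l i :=
      Finset.single_le_sum (f := fun l => A (s + m) j l * Phi A s m l i)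
        (fun l _ => mul_nonneg (hnn _ _ _) (Phi_nonneg hnn s m l i)) (Finset.mem_univ l)

lemma Phi_mono (hnn : ∀ k i j, 0 ≤ A k i j) (hε : 0 < ε) (hdiag : ∀ k j, ε ≤ A k j j)
    {s m m' : ℕ} (hm : m ≤ m') {j i : Fin n} (hP : 0 < Phi A s m j i) :
    0 < Phi A s m' j i := by
  induction m' with
  | zero => simpa [Nat.le_zero.mp hm] using hP
  | succ m' ih =>
    rcases hm.lt_or_eq with h | h
    · exact Phi_step hnn (lt_of_lt_of_le hε (hdiag _ _)) (ih (Nat.lt_succ_iff.mp h))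
    · rwa [← h]

lemma Phi_diag (hnn : ∀ k i j, 0 ≤ A k i j) (hε : 0 < ε) (hdiag : ∀ k j, ε ≤ A k j j)
    (s m : ℕ) (i : Fin n) : 0 < Phi A s m i i := by
  induction m with
  | zero => simp [Phi, Matrix.one_apply]
  | succ m ih => exact Phi_step hnn (lt_of_lt_of_le hε (hdiag _ _)) ih

lemma Phi_add (s a b : ℕ) : Phi A s (a + b) = Phi A (s + b) a * Phi A s b := by
  induction a with
  | zero => simp [Phi]
  | succ a ih =>
    have h1 : a + 1 + b = (a + b) + 1 := by ring
    have h2 : s + (a + b) = (s + b) + a := by ring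
    rw [h1]
    show A (s + (a + b)) * Phi A s (a + b) = _
    rw [ih, h2]
    show A ((s + b) + a) * (Phi A (s + b) a * Phi A s b) = Phi A (s+b) (a+1) * Phi A s b
    rw [← Matrix.mul_assoc]
    rfl

lemma crossing {α : Type*} (r : α → α → Prop) (S : α → Prop) {a b : α}
    (h : Relation.TransGen r a b) (hb : S b) (ha : ¬ S a) :
    ∃ j l, ¬ S j ∧ S l ∧ r j l := by
  induction h with
  | single hr => exact ⟨_, _, ha, hb, hr⟩
  | @tail c d h hr ih =>
    by_cases hc : S c
    · exact ih hc
    · exact ⟨c, d, hc, hb, hr⟩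

lemma grow (hnn : ∀ k i j, 0 ≤ A k i j) (hε : 0 < ε) (hdiag : ∀ k j, ε ≤ A k j j)
    (hconn : ∀ k : ℕ, ∀ a b : Fin n, a ≠ b →
      Relation.TransGen (fun j i => (∃ t < B, 0 < A (k * B + t) j i) ∧ i ≠ j) a b)
    (k0 : ℕ) (i : Fin n) :
    ∀ m, min (m + 1) n ≤ (Finset.univ.filter
      (fun j => 0 < Phi A (k0 * B) (m * B) j i)).card := by
  intro m
  induction m with
  | zero =>
    have hi : i ∈ Finset.univ.filter (fun j => 0 < Phi A (k0 * B) (0 * B) j i) := by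
      simp only [Finset.mem_filter, Finset.mem_univ, true_and]
      exact Phi_diag hnn hε hdiag _ _ i
    calc min 1 n ≤ 1 := min_le_left _ _
    _ ≤ _ := Finset.card_pos.mpr ⟨i, hi⟩
  | succ m ih =>
    set S : ℕ → Finset (Fin n) :=
      fun m => Finset.univ.filter (fun j => 0 < Phi A (k0 * B) (m * B) j i) with hS
    have hmem : ∀ m' j, j ∈ S m' ↔ 0 < Phi A (k0 * B) (m' * B) j i := by
      intro m' j; simp [hS]
    have hsub : S m ⊆ S (m + 1) := by
      intro j hj
      rw [hmem] at hj ⊢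
      exact Phi_mono hnn hε hdiag (Nat.mul_le_mul_right B (Nat.le_succ m)) hj
    by_cases huniv : S m = Finset.univ
    · have h2 : S (m + 1) = Finset.univ :=
        Finset.eq_univ_iff_forall.mpr (fun j => hsub (huniv ▸ Finset.mem_univ j))
      calc (m + 1 + 1) ⊓ n ≤ n := min_le_right _ _
      _ ≤ (S (m + 1)).card := by rw [h2, Finset.card_univ, Fintype.card_fin]
    · obtain ⟨b, hb⟩ : ∃ b, b ∉ S m := by
        by_contra h
        push_neg at h
        exact huniv (Finset.eq_univ_iff_forall.mpr h)
      have hi : i ∈ S m := (hmem m i).mpr (Phi_diag hnn hε hdiag _ _ i)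
      have hbi : b ≠ i := fun h => hb (h ▸ hi)
      obtain ⟨j, l, hjS, hlS, ⟨⟨t, ht, hA⟩, -⟩⟩ :=
        crossing _ (fun j => j ∈ S m) (hconn (k0 + m) b i hbi) hi hb
      have hA' : 0 < A (k0 * B + (m * B + t)) j l := by
        have : (k0 + m) * B + t = k0 * B + (m * B + t) := by ring
        rwa [this] at hA
      have hl : 0 < Phi A (k0 * B) (m * B + t) l i :=
        Phi_mono hnn hε hdiag (Nat.le_add_right _ _) ((hmem m l).mp hlS)
      have hjnew : j ∈ S (m + 1) := by
        rw [hmem]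
        refine Phi_mono hnn hε hdiag ?_ (Phi_step hnn hA' hl)
        have : m * B + t + 1 ≤ m * B + B := by omega
        simpa [Nat.succ_mul] using this
      have hins : insert j (S m) ⊆ S (m + 1) := by
        intro x hx
        rcases Finset.mem_insert.mp hx with h | h
        · exact h ▸ hjnew
        · exact hsub h
      have hcard : (S m).card + 1 ≤ (S (m + 1)).card := by
        rw [← Finset.card_insert_of_notMem hjS]
        exact Finset.card_le_card hins
      have hn : (S m).card ≤ n := by
        simpa using Finset.card_le_card (Finset.subset_univ (S m))
      have ih' : (m + 1) ⊓ n ≤ (S m).card := ih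
      show (m + 1 + 1) ⊓ n ≤ (S (m + 1)).card
      omega

lemma all_pos (hnn : ∀ k i j, 0 ≤ A k i j) (hε : 0 < ε) (hdiag : ∀ k j, ε ≤ A k j j)
    (hconn : ∀ k : ℕ, ∀ a b : Fin n, a ≠ b →
      Relation.TransGen (fun j i => (∃ t < B, 0 < A (k * B + t) j i) ∧ i ≠ j) a b)
    (hn : 1 ≤ n) (k0 : ℕ) (j i : Fin n) :
    0 < Phi A (k0 * B) ((n - 1) * B) j i := by
  have h := grow hnn hε hdiag hconn k0 i (n - 1)
  rw [Nat.sub_add_cancel hn, min_self] at h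
  have huniv : Finset.univ.filter (fun j => 0 < Phi A (k0 * B) ((n - 1) * B) j i)
      = Finset.univ := by
    have hcard : (Finset.univ.filter
        (fun j => 0 < Phi A (k0 * B) ((n - 1) * B) j i)).card = n :=
      le_antisymm (by
        simpa using Finset.card_le_card (Finset.subset_univ
          (Finset.univ.filter (fun j => 0 < Phi A (k0 * B) ((n - 1) * B) j i))))
        (by simpa using h)
    apply Finset.eq_univ_of_card
    rw [hcard, Fintype.card_fin]
  have := Finset.eq_univ_iff_forall.mp huniv j
  simpa using this

lemma dobrushin {n : ℕ} (D : Matrix (Fin n) (Fin n) ℝ) (γ : ℝ)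
    (hD : ∀ j i, γ ≤ D j i) (hcolD : ∀ i, ∑ j, D j i = 1)
    (w : Fin n → ℝ) (hw : ∑ l, w l = 0) :
    ∑ j, |D.mulVec w j| ≤ (1 - n * γ) * ∑ l, |w l| := by
  have h1 : ∀ j, D.mulVec w j = ∑ l, (D j l - γ) * w l := by
    intro j
    simp only [Matrix.mulVec, dotProduct, sub_mul, Finset.sum_sub_distrib,
      ← Finset.mul_sum, hw, mul_zero, sub_zero]
  calc ∑ j, |D.mulVec w j| ≤ ∑ j, ∑ l, (D j l - γ) * |w l| := by
        refine Finset.sum_le_sum fun j _ => ?_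
        rw [h1]
        refine (Finset.abs_sum_le_sum_abs _ _).trans (Finset.sum_le_sum fun l _ => ?_)
        rw [abs_mul, abs_of_nonneg (sub_nonneg.2 (hD j l))]
  _ = ∑ l, (1 - n * γ) * |w l| := by
        rw [Finset.sum_comm]
        refine Finset.sum_congr rfl fun l _ => ?_
        rw [← Finset.sum_mul]
        congr 1
        rw [Finset.sum_sub_distrib, hcolD]
        simp [mul_comm]
  _ = (1 - n * γ) * ∑ l, |w l| := by rw [Finset.mul_sum]

end Stmt10

/-- Wolfowitz-type ergodicity of forward products: for column stochastic
matrices `A[k]` with diagonal entries `≥ ε`, all entries either `0` or `≥ ε`, and the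
union graph over each window `[kB, kB + B - 1]` strongly connected, the forward products
`B_{k:0} = A[k] ⋯ A[0]` have asymptotically coinciding columns. -/
theorem stmt10 (n : ℕ) (ε : ℝ) (hε : 0 < ε) (B : ℕ) (hB : 1 ≤ B)
    (A : ℕ → Matrix (Fin n) (Fin n) ℝ)
    (hnn : ∀ k i j, 0 ≤ A k i j) (hcol : ∀ k j, ∑ i, A k i j = 1)
    (hdiag : ∀ k j, ε ≤ A k j j)
    (hent : ∀ k i j, A k i j = 0 ∨ ε ≤ A k i j)
    (hconn : ∀ k : ℕ, ∀ a b : Fin n, a ≠ b →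
      Relation.TransGen (fun j i => (∃ t < B, 0 < A (k * B + t) j i) ∧ i ≠ j) a b)
    (Bp : ℕ → Matrix (Fin n) (Fin n) ℝ)
    (hBp0 : Bp 0 = A 0) (hBpk : ∀ k, Bp (k + 1) = A (k + 1) * Bp k) :
    ∀ j i i', Filter.Tendsto (fun k => Bp k j i - Bp k j i') Filter.atTop (nhds 0) := by
  intro j i i'
  by_cases hii : i = i'
  · simpa [hii] using tendsto_const_nhds
  -- from two distinct indices, n ≥ 2
  have hn2 : 2 ≤ n := by
    have : 1 < Fintype.card (Fin n) := Fintype.one_lt_card_iff_nontrivial.mpr ⟨⟨i, i', hii⟩⟩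
    simp at this; omega
  have hn1 : 1 ≤ n := by omega
  open Stmt10 in
  -- Bp in terms of Phi
  have hBpPhi : ∀ k, Bp k = Stmt10.Phi A 0 (k + 1) := by
    intro k
    induction k with
    | zero => simp [Stmt10.Phi, hBp0]
    | succ k ih => rw [hBpk, ih]; simp [Stmt10.Phi]
  set L : ℕ := (n - 1) * B with hL
  have hLpos : 0 < L := by
    have : 1 ≤ n - 1 := by omega
    exact Nat.mul_pos this hB
  set γ : ℝ := ε ^ L with hγdef
  have hγ : 0 < γ := by positivity
  -- entrywise lower bound on window products
  have hD : ∀ (m : ℕ) (a b : Fin n), γ ≤ Stmt10.Phi A (m * L) L a b := by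
    intro m a b
    have hpos : 0 < Stmt10.Phi A ((m * (n - 1)) * B) ((n - 1) * B) a b :=
      Stmt10.all_pos hnn hε hdiag hconn hn1 (m * (n - 1)) a b
    have heq : (m * (n - 1)) * B = m * L := by rw [hL]; ring
    rw [heq] at hpos
    exact Stmt10.Phi_pos_le hnn hε hent _ _ _ _ hpos
  set u : ℕ → Fin n → ℝ := fun t l => Stmt10.Phi A 0 t l i - Stmt10.Phi A 0 t l i' with hu
  set g : ℕ → ℝ := fun t => ∑ l, |u t l| with hg
  have hsum : ∀ t, ∑ l, u t l = 0 := by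
    intro t
    simp [hu, Finset.sum_sub_distrib, Stmt10.Phi_col hcol]
  have hstep_vec : ∀ t, u (t + 1) = (A t).mulVec (u t) := by
    intro t
    funext l
    simp only [hu, Stmt10.Phi, Matrix.mul_apply, Matrix.mulVec, dotProduct,
      zero_add, mul_sub, Finset.sum_sub_distrib]
  have hg_step : ∀ t, g (t + 1) ≤ g t := by
    intro t
    have := Stmt10.dobrushin (A t) 0 (fun a b => hnn t a b) (fun b => hcol t b)
      (u t) (hsum t)
    rw [← hstep_vec t] at this
    simpa [hg] using this
  have hg_anti : ∀ {t t'}, t ≤ t' → g t' ≤ g t := by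
    intro t t' h
    induction t' with
    | zero => rw [Nat.le_zero.mp h]
    | succ t' ih =>
      rcases h.lt_or_eq with h' | h'
      · exact (hg_step t').trans (ih (Nat.lt_succ_iff.mp h'))
      · rw [← h']
  set r : ℝ := 1 - n * γ with hr
  have hr1 : r < 1 := by
    have : 0 < (n : ℝ) * γ := by positivity
    simp only [hr]; linarith
  have hr0 : 0 ≤ r := by
    have h1 : (n : ℝ) * γ ≤ 1 := by
      have hcolD := Stmt10.Phi_col hcol (0 * L) L i
      calc (n : ℝ) * γ = ∑ _l : Fin n, γ := by
            simp [Finset.sum_const, mul_comm]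
      _ ≤ ∑ l, Stmt10.Phi A (0 * L) L l i := Finset.sum_le_sum fun l _ => hD 0 l i
      _ = 1 := hcolD
    simp only [hr]; linarith
  have hcontr : ∀ m, g ((m + 1) * L) ≤ r * g (m * L) := by
    intro m
    have hdec : u ((m + 1) * L) = (Stmt10.Phi A (m * L) L).mulVec (u (m * L)) := by
      have harith : (m + 1) * L = L + m * L := by ring
      have hPhi : Stmt10.Phi A 0 ((m + 1) * L)
          = Stmt10.Phi A (m * L) L * Stmt10.Phi A 0 (m * L) := by
        rw [harith]
        simpa using Stmt10.Phi_add (A := A) 0 L (m * L)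
      funext l
      simp only [hu, hPhi, Matrix.mul_apply, Matrix.mulVec, dotProduct,
        mul_sub, Finset.sum_sub_distrib]
    have := Stmt10.dobrushin (Stmt10.Phi A (m * L) L) γ (hD m)
      (fun b => Stmt10.Phi_col hcol (m * L) L b) (u (m * L)) (hsum (m * L))
    rw [← hdec] at this
    simpa [hg, hr] using this
  have hgeom : ∀ m, g (m * L) ≤ r ^ m * g 0 := by
    intro m
    induction m with
    | zero => simp
    | succ m ih =>
      calc g ((m + 1) * L) ≤ r * g (m * L) := hcontr m
      _ ≤ r * (r ^ m * g 0) := mul_le_mul_of_nonneg_left ih hr0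
      _ = r ^ (m + 1) * g 0 := by ring
  -- final bound
  have hbound : ∀ k, |Bp k j i - Bp k j i'| ≤ r ^ ((k + 1) / L) * g 0 := by
    intro k
    have h1 : Bp k j i - Bp k j i' = u (k + 1) j := by
      rw [hBpPhi k]
    have h2 : |u (k + 1) j| ≤ g (k + 1) :=
      Finset.single_le_sum (f := fun l => |u (k + 1) l|)
        (fun l _ => abs_nonneg _) (Finset.mem_univ j)
    have h3 : g (k + 1) ≤ g (((k + 1) / L) * L) :=
      hg_anti (Nat.div_mul_le_self (k + 1) L)
    rw [h1]
    exact h2.trans (h3.trans (hgeom _))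
  have hdiv : Filter.Tendsto (fun k : ℕ => (k + 1) / L) Filter.atTop Filter.atTop := by
    refine Filter.tendsto_atTop_atTop.mpr fun b => ⟨b * L, fun k hk => ?_⟩
    rw [Nat.le_div_iff_mul_le hLpos]
    omega
  have htend : Filter.Tendsto (fun k : ℕ => r ^ ((k + 1) / L) * g 0)
      Filter.atTop (nhds 0) := by
    have h1 : Filter.Tendsto (fun m : ℕ => r ^ m) Filter.atTop (nhds 0) :=
      tendsto_pow_atTop_nhds_zero_of_lt_one hr0 hr1
    have h2 := (h1.comp hdiv).mul_const (g 0)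
    simpa using h2
  refine squeeze_zero_norm (fun k => ?_) htend
  simpa [Real.norm_eq_abs] using hbound k
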